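/- For the iterated Latin hypercube sampling sequence with k ≥ 2 coordinates, for any finite times t_1, …, t_k ≥ 0, the k-tuple {U_{t_1}^{(1)}, …, U_{t_k}^{(k)}} is a set of negatively associated random variables. -/

import Mathlib

open MeasureTheory ProbabilityTheory

instance {k : ℕ} : MeasurableSpace (Equiv.Perm (Fin k)) := ⊤

/-- The iterated Latin hypercube sampling (ILHS) recursion:
`U₀` has i.i.d. Uniform(0,1) coordinates and
`U_{t+1}⁽ʲ⁾ = (σ_t(j) + U_t⁽ʲ⁾)/k`. -/
noncomputable def ilhs {Ω : Type*} {k : ℕ} (U0 : Fin k → Ω → ℝ)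
    (σ : ℕ → Ω → Equiv.Perm (Fin k)) : ℕ → Fin k → Ω → ℝ
  | 0 => U0
  | t + 1 => fun j ω => (((σ t ω j : ℕ) : ℝ) + ilhs U0 σ t j ω) / k

/-- Value types for the joint family consisting of the initial uniforms and the random
permutations. -/
def ilhsβ (k : ℕ) : Fin k ⊕ ℕ → Type
  | Sum.inl _ => ℝ
  | Sum.inr _ => Equiv.Perm (Fin k)

instance ilhsβMeasurableSpace (k : ℕ) : ∀ x, MeasurableSpace (ilhsβ k x)
  | Sum.inl _ => (inferInstance : MeasurableSpace ℝ)
  | Sum.inr _ => (inferInstance : MeasurableSpace (Equiv.Perm (Fin k)))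

/-- The joint family consisting of the initial uniforms and the random permutations. -/
def ilhsFam {Ω : Type*} {k : ℕ} (U0 : Fin k → Ω → ℝ)
    (σ : ℕ → Ω → Equiv.Perm (Fin k)) : ∀ x : Fin k ⊕ ℕ, Ω → ilhsβ k x
  | Sum.inl j => U0 j
  | Sum.inr t => σ t

/-- The defining hypotheses of the ILHS sequence: the initial coordinates are
Uniform(0,1), each `σ_t` is a uniformly distributed random permutation of
`{0, …, k−1}`, and all of these are mutually independent. -/
def IsILHS {Ω : Type*} [MeasurableSpace Ω] (μ : Measure Ω) {k : ℕ}
    (U0 : Fin k → Ω → ℝ) (σ : ℕ → Ω → Equiv.Perm (Fin k)) : Prop :=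
  (∀ j, Measurable (U0 j)) ∧ (∀ t, Measurable (σ t)) ∧
  (∀ j, μ.map (U0 j) = volume.restrict (Set.Ioo (0 : ℝ) 1)) ∧
  (∀ t (π : Equiv.Perm (Fin k)), μ {ω | σ t ω = π} = ((Nat.factorial k : ENNReal))⁻¹) ∧
  iIndepFun (m := ilhsβMeasurableSpace k) (ilhsFam U0 σ) μ

/-- Covariance of two real-valued functions with respect to a measure. -/
noncomputable def covar {Ω : Type*} [MeasurableSpace Ω] (μ : Measure Ω) (f g : Ω → ℝ) : ℝ :=
  (∫ ω, f ω * g ω ∂μ) - (∫ ω, f ω ∂μ) * ∫ ω, g ω ∂μ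

/-- Negative association of a finite family of real-valued random variables. -/
def NegAssoc {Ω : Type*} [MeasurableSpace Ω] (μ : Measure Ω) {n : ℕ}
    (X : Fin n → Ω → ℝ) : Prop :=
  ∀ A₁ A₂ : Finset (Fin n), Disjoint A₁ A₂ →
    ∀ f₁ : ({ i // i ∈ A₁ } → ℝ) → ℝ, ∀ f₂ : ({ i // i ∈ A₂ } → ℝ) → ℝ,
      Monotone f₁ → Monotone f₂ → Measurable f₁ → Measurable f₂ →
      Integrable (fun ω => f₁ (fun i => X i.1 ω)) μ →
      Integrable (fun ω => f₂ (fun i => X i.1 ω)) μ →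
      Integrable (fun ω => f₁ (fun i => X i.1 ω) * f₂ (fun i => X i.1 ω)) μ →
      covar μ (fun ω => f₁ (fun i => X i.1 ω)) (fun ω => f₂ (fun i => X i.1 ω)) ≤ 0




open MeasureTheory ProbabilityTheory Finset Equiv

namespace ILHSProof

/-- `f` depends only on coordinates in `J`. -/
def DepOn {ι : Type*} (f : (ι → ℝ) → ℝ) (J : Finset ι) : Prop :=
  ∀ x y : ι → ℝ, (∀ i ∈ J, x i = y i) → f x = f y

/-- real-vector of a permutation -/
def vv {n : ℕ} (π : Equiv.Perm (Fin n)) : Fin n → ℝ := fun j => ((π j : ℕ) : ℝ)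

/-- extend a permutation of `Fin n` to `Fin (n+1)` fixing `last n` -/
def extLast {n : ℕ} (τ : Equiv.Perm (Fin n)) : Equiv.Perm (Fin (n+1)) :=
  finSuccEquivLast.symm.permCongr τ.optionCongr

@[simp] lemma extLast_castSucc {n : ℕ} (τ : Equiv.Perm (Fin n)) (m : Fin n) :
    extLast τ (Fin.castSucc m) = Fin.castSucc (τ m) := by
  simp [extLast, Equiv.permCongr_apply]

@[simp] lemma extLast_last {n : ℕ} (τ : Equiv.Perm (Fin n)) :
    extLast τ (Fin.last n) = Fin.last n := by
  simp [extLast, Equiv.permCongr_apply]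

variable {n : ℕ}

lemma swap_last_ne {j i : Fin (n+1)} (h : i ≠ j) :
    Equiv.swap j (Fin.last n) i ≠ Fin.last n := by
  intro hh
  exact h ((Equiv.swap j (Fin.last n)).injective
    (hh.trans (Equiv.swap_apply_left j (Fin.last n)).symm))

/-- index transfer map -/
def rr [NeZero n] (j i : Fin (n+1)) : Fin n :=
  if h : Equiv.swap j (Fin.last n) i = Fin.last n then 0
  else (Equiv.swap j (Fin.last n) i).castPred h

lemma rr_injOn [NeZero n] {j i₁ i₂ : Fin (n+1)} (h₁ : i₁ ≠ j) (h₂ : i₂ ≠ j)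
    (h : rr j i₁ = rr j i₂) : i₁ = i₂ := by
  rw [rr, dif_neg (swap_last_ne h₁), rr, dif_neg (swap_last_ne h₂)] at h
  have := congrArg Fin.castSucc h
  rw [Fin.castSucc_castPred, Fin.castSucc_castPred] at this
  exact (Equiv.swap j (Fin.last n)).injective this

/-- the permutation of `Fin (n+1)` sending position `j` to `last n` and position
`i ≠ j` to `castSucc (τ (rr j i))`. -/
def Φ (j : Fin (n+1)) (τ : Equiv.Perm (Fin n)) : Equiv.Perm (Fin (n+1)) :=
  (Equiv.swap j (Fin.last n)).trans (extLast τ)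

@[simp] lemma Φ_apply_self (j : Fin (n+1)) (τ : Equiv.Perm (Fin n)) :
    Φ j τ j = Fin.last n := by
  simp [Φ, Equiv.trans_apply]

lemma Φ_apply_ne [NeZero n] {j i : Fin (n+1)} (τ : Equiv.Perm (Fin n)) (h : i ≠ j) :
    Φ j τ i = Fin.castSucc (τ (rr j i)) := by
  have hne := swap_last_ne h
  have h2 : Fin.castSucc ((Equiv.swap j (Fin.last n) i).castPred hne)
      = Equiv.swap j (Fin.last n) i := Fin.castSucc_castPred _ _
  rw [Φ, Equiv.trans_apply]
  conv_lhs => rw [← h2]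
  rw [extLast_castSucc, rr, dif_neg hne]

def KK [NeZero n] (j : Fin (n+1)) (w : Fin n → ℝ) : Fin (n+1) → ℝ :=
  fun i => if i = j then (n : ℝ) else w (rr j i)

lemma KK_mono [NeZero n] (j : Fin (n+1)) : Monotone (KK j) := by
  intro w w' h i
  dsimp [KK]; split
  · exact le_rfl
  · exact h _

lemma vv_Φ [NeZero n] (j : Fin (n+1)) (τ : Equiv.Perm (Fin n)) :
    vv (Φ j τ) = KK j (vv τ) := by
  funext i
  by_cases h : i = j
  · subst h; simp [vv, KK]
  · rw [show vv (Φ j τ) i = ((Φ j τ i : ℕ) : ℝ) from rfl, Φ_apply_ne τ h]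
    simp [KK, h, vv]

def Ψ (j : Fin (n+1)) (π : Equiv.Perm (Fin (n+1))) : Equiv.Perm (Fin n) :=
  Equiv.removeNone (finSuccEquivLast.permCongr ((Equiv.swap j (Fin.last n)).trans π))

lemma Ψ_Φ (j : Fin (n+1)) (τ : Equiv.Perm (Fin n)) : Ψ j (Φ j τ) = τ := by
  have h1 : (Equiv.swap j (Fin.last n)).trans (Φ j τ) = extLast τ := by
    rw [Φ, ← Equiv.trans_assoc, Equiv.swap_swap, Equiv.refl_trans]
  rw [Ψ, h1, extLast, ← Equiv.permCongr_symm, Equiv.apply_symm_apply,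
    Equiv.removeNone_optionCongr]

lemma Φ_Ψ (j : Fin (n+1)) (π : Equiv.Perm (Fin (n+1))) (hπ : π j = Fin.last n) :
    Φ j (Ψ j π) = π := by
  set d := (Equiv.swap j (Fin.last n)).trans π with hd
  have hdlast : d (Fin.last n) = Fin.last n := by
    rw [hd, Equiv.trans_apply, Equiv.swap_apply_right, hπ]
  have hext : extLast (Ψ j π) = d := by
    apply Equiv.ext
    intro i
    induction i using Fin.lastCases with
    | last => rw [extLast_last, hdlast]
    | cast m =>
      have hx : d (Fin.castSucc m) ≠ Fin.last n := by
        intro hh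
        exact (Fin.castSucc_lt_last m).ne (d.injective (hh.trans hdlast.symm))
      have hcs : Fin.castSucc ((d (Fin.castSucc m)).castPred hx) = d (Fin.castSucc m) :=
        Fin.castSucc_castPred _ _
      have hsome : (finSuccEquivLast.permCongr d) (some m)
          = some ((d (Fin.castSucc m)).castPred hx) := by
        rw [Equiv.permCongr_apply]
        rw [show ((finSuccEquivLast.symm) (some m) : Fin (n+1)) = Fin.castSucc m from
          finSuccEquivLast_symm_some m]
        conv_lhs => rw [← hcs]
        exact finSuccEquivLast_castSucc _
      have : Equiv.removeNone (finSuccEquivLast.permCongr d) m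
          = (d (Fin.castSucc m)).castPred hx := by
        have h2 := Equiv.removeNone_some (finSuccEquivLast.permCongr d)
          (⟨_, hsome⟩ : ∃ x', (finSuccEquivLast.permCongr d) (some m) = some x')
        rw [hsome] at h2
        exact Option.some_injective _ h2
      rw [extLast_castSucc, Ψ, ← hd]
      rw [show Equiv.removeNone (finSuccEquivLast.permCongr d) m
        = (d (Fin.castSucc m)).castPred hx from this]
      exact hcs
  rw [Φ, hext, hd, ← Equiv.trans_assoc, Equiv.swap_swap, Equiv.refl_trans]




lemma sum_filter_eq (j : Fin (n+1)) (F : Equiv.Perm (Fin (n+1)) → ℝ) :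
    ∑ π ∈ univ.filter (fun π => π j = Fin.last n), F π
      = ∑ τ : Equiv.Perm (Fin n), F (Φ j τ) := by
  refine Finset.sum_nbij' (Ψ j) (Φ j) ?_ ?_ ?_ ?_ ?_
  · intro π _; exact mem_univ _
  · intro τ _; simp only [mem_filter, mem_univ, true_and, Φ_apply_self]
  · intro π hπ
    simp only [mem_filter, mem_univ, true_and] at hπ
    exact Φ_Ψ j π hπ
  · intro τ _; exact Ψ_Φ j τ
  · intro π hπ
    simp only [mem_filter, mem_univ, true_and] at hπ
    rw [Φ_Ψ j π hπ]

lemma sum_partition (F : Equiv.Perm (Fin (n+1)) → ℝ) :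
    ∑ π : Equiv.Perm (Fin (n+1)), F π
      = ∑ j : Fin (n+1), ∑ π ∈ univ.filter (fun π => π j = Fin.last n), F π := by
  rw [← Finset.sum_fiberwise univ (fun π : Equiv.Perm (Fin (n+1)) => π.symm (Fin.last n)) F]
  refine Finset.sum_congr rfl fun j _ => Finset.sum_congr ?_ fun _ _ => rfl
  ext π
  simp only [mem_filter, mem_univ, true_and, Equiv.symm_apply_eq]
  constructor
  · intro h; exact h.symm
  · intro h; exact h.symm

lemma swap_trans_cancel {j j' : Fin (n+1)} (π : Equiv.Perm (Fin (n+1))) :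
    (Equiv.swap j j').trans ((Equiv.swap j j').trans π) = π := by
  rw [← Equiv.trans_assoc, Equiv.swap_swap, Equiv.refl_trans]

lemma S_eq {J : Finset (Fin (n+1))} {f : (Fin (n+1) → ℝ) → ℝ}
    (hd : DepOn f J) {j j' : Fin (n+1)} (hj : j ∉ J) (hj' : j' ∉ J) :
    ∑ π ∈ univ.filter (fun π => π j = Fin.last n), f (vv π)
      = ∑ π ∈ univ.filter (fun π => π j' = Fin.last n), f (vv π) := by
  refine Finset.sum_nbij' (fun π => (Equiv.swap j j').trans π)
    (fun π => (Equiv.swap j j').trans π) ?_ ?_ ?_ ?_ ?_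
  · intro π hπ
    simp only [mem_filter, mem_univ, true_and] at *
    rw [Equiv.trans_apply, Equiv.swap_apply_right]; exact hπ
  · intro π hπ
    simp only [mem_filter, mem_univ, true_and] at *
    rw [Equiv.trans_apply, Equiv.swap_apply_left]; exact hπ
  · intro π _; exact swap_trans_cancel π
  · intro π _; exact swap_trans_cancel π
  · intro π _
    refine hd _ _ fun i hi => ?_
    have hij : i ≠ j := fun h => hj (h ▸ hi)
    have hij' : i ≠ j' := fun h => hj' (h ▸ hi)
    simp only [vv, Equiv.trans_apply, Equiv.swap_apply_of_ne_of_ne hij hij']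

lemma S_le {J : Finset (Fin (n+1))} {f : (Fin (n+1) → ℝ) → ℝ}
    (hm : Monotone f) (hd : DepOn f J) {j j' : Fin (n+1)} (hj : j ∈ J) (hj' : j' ∉ J) :
    ∑ π ∈ univ.filter (fun π => π j' = Fin.last n), f (vv π)
      ≤ ∑ π ∈ univ.filter (fun π => π j = Fin.last n), f (vv π) := by
  have hjj' : j ≠ j' := fun h => hj' (h ▸ hj)
  have hstep : ∑ π ∈ univ.filter (fun π => π j' = Fin.last n), f (vv π)
      = ∑ π ∈ univ.filter (fun π => π j = Fin.last n), f (vv ((Equiv.swap j j').trans π)) := by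
    refine Finset.sum_nbij' (fun π => (Equiv.swap j j').trans π)
      (fun π => (Equiv.swap j j').trans π) ?_ ?_ ?_ ?_ ?_
    · intro π hπ
      simp only [mem_filter, mem_univ, true_and] at *
      rw [Equiv.trans_apply, Equiv.swap_apply_left]; exact hπ
    · intro π hπ
      simp only [mem_filter, mem_univ, true_and] at *
      rw [Equiv.trans_apply, Equiv.swap_apply_right]; exact hπ
    · intro π _; exact swap_trans_cancel π
    · intro π _; exact swap_trans_cancel π
    · intro π _; rw [swap_trans_cancel π]
  rw [hstep]
  refine Finset.sum_le_sum fun π hπ => ?_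
  simp only [mem_filter, mem_univ, true_and] at hπ
  set π' := (Equiv.swap j j').trans π with hπ'
  set u : Fin (n+1) → ℝ := fun i => if i = j then vv π' j else vv π i with hu
  have h1 : f (vv π') = f u := by
    refine hd _ _ fun i hi => ?_
    by_cases hij : i = j
    · subst hij; rw [hu]; simp
    · have hij' : i ≠ j' := fun h => hj' (h ▸ hi)
      rw [hu]; simp only [if_neg hij]
      simp only [vv, hπ', Equiv.trans_apply, Equiv.swap_apply_of_ne_of_ne hij hij']
  have h2 : u ≤ vv π := by
    intro i
    by_cases hij : i = j
    · subst hij; rw [hu]; simp only [if_pos rfl]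
      rw [show vv π i = ((π i : ℕ) : ℝ) from rfl, hπ]
      simp only [vv, Fin.val_last]
      exact_mod_cast Fin.is_le (π' i)
    · rw [hu]; simp only [if_neg hij]; exact le_rfl
  calc f (vv π') = f u := h1
    _ ≤ f (vv π) := hm h2

lemma core_const_left {n : ℕ} {f₁ f₂ : (Fin n → ℝ) → ℝ}
    (hc : ∀ x y : Fin n → ℝ, f₁ x = f₁ y) :
    (n.factorial : ℝ) * ∑ π : Equiv.Perm (Fin n), f₁ (vv π) * f₂ (vv π)
      = (∑ π : Equiv.Perm (Fin n), f₁ (vv π)) * ∑ π : Equiv.Perm (Fin n), f₂ (vv π) := by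
  have h1 : ∑ π : Equiv.Perm (Fin n), f₁ (vv π) * f₂ (vv π)
      = f₁ (vv 1) * ∑ π : Equiv.Perm (Fin n), f₂ (vv π) := by
    rw [Finset.mul_sum]
    exact Finset.sum_congr rfl fun π _ => by rw [hc (vv π) (vv 1)]
  have h2 : ∑ π : Equiv.Perm (Fin n), f₁ (vv π) = (n.factorial : ℝ) * f₁ (vv 1) := by
    rw [show ∑ π : Equiv.Perm (Fin n), f₁ (vv π)
        = ∑ _π : Equiv.Perm (Fin n), f₁ (vv 1) from
      Finset.sum_congr rfl fun π _ => by rw [hc (vv π) (vv 1)]]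
    rw [Finset.sum_const, Finset.card_univ, Fintype.card_perm, Fintype.card_fin,
      nsmul_eq_mul]
  rw [h1, h2]; ring

lemma core_const_right {n : ℕ} {f₁ f₂ : (Fin n → ℝ) → ℝ}
    (hc : ∀ x y : Fin n → ℝ, f₂ x = f₂ y) :
    (n.factorial : ℝ) * ∑ π : Equiv.Perm (Fin n), f₁ (vv π) * f₂ (vv π)
      = (∑ π : Equiv.Perm (Fin n), f₁ (vv π)) * ∑ π : Equiv.Perm (Fin n), f₂ (vv π) := by
  have := core_const_left (f₂ := f₁) hc
  rw [show (∑ π : Equiv.Perm (Fin n), f₂ (vv π) * f₁ (vv π))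
      = ∑ π : Equiv.Perm (Fin n), f₁ (vv π) * f₂ (vv π) from
    Finset.sum_congr rfl fun π _ => mul_comm _ _] at this
  rw [this]; ring

/-- Core combinatorial lemma: the coordinates of a uniform random permutation
are negatively associated (Joag-Dev & Proschan). -/
theorem perm_core (n : ℕ) : ∀ J₁ J₂ : Finset (Fin n), Disjoint J₁ J₂ →
    ∀ f₁ f₂ : (Fin n → ℝ) → ℝ, Monotone f₁ → Monotone f₂ → DepOn f₁ J₁ → DepOn f₂ J₂ →
    (n.factorial : ℝ) * ∑ π : Equiv.Perm (Fin n), f₁ (vv π) * f₂ (vv π)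
      ≤ (∑ π : Equiv.Perm (Fin n), f₁ (vv π)) * ∑ π : Equiv.Perm (Fin n), f₂ (vv π) := by
  induction n with
  | zero =>
    intro J₁ J₂ _ f₁ f₂ _ _ _ _
    exact le_of_eq (core_const_left fun x y => by rw [Subsingleton.elim x y])
  | succ n IH =>
    intro J₁ J₂ hdisj f₁ f₂ hm₁ hm₂ hd₁ hd₂
    by_cases h1 : J₁ = ∅
    · refine le_of_eq (core_const_left fun x y => hd₁ x y fun i hi => ?_)
      simp [h1] at hi
    by_cases h2 : J₂ = ∅
    · refine le_of_eq (core_const_right fun x y => hd₂ x y fun i hi => ?_)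
      simp [h2] at hi
    obtain ⟨j₁, hj₁⟩ := Finset.nonempty_of_ne_empty h1
    obtain ⟨j₂, hj₂⟩ := Finset.nonempty_of_ne_empty h2
    have hj₁₂ : j₁ ≠ j₂ := by
      intro h
      exact (Finset.disjoint_left.mp hdisj hj₁) (h ▸ hj₂)
    have hn : n ≠ 0 := by
      intro h; subst h
      have a := j₁.isLt; have b := j₂.isLt
      exact hj₁₂ (Fin.ext (by omega))
    haveI : NeZero n := ⟨hn⟩
    have hj₂n₁ : j₂ ∉ J₁ := fun h => (Finset.disjoint_left.mp hdisj h) hj₂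
    have hj₁n₂ : j₁ ∉ J₂ := fun h => Finset.disjoint_left.mp hdisj hj₁ h
    set S₁ : Fin (n+1) → ℝ :=
      fun j => ∑ π ∈ univ.filter (fun π => π j = Fin.last n), f₁ (vv π) with hS₁
    set S₂ : Fin (n+1) → ℝ :=
      fun j => ∑ π ∈ univ.filter (fun π => π j = Fin.last n), f₂ (vv π) with hS₂
    -- step: conditional covariance inequality via induction hypothesis
    have hstep : ∀ j : Fin (n+1),
        (n.factorial : ℝ) * ∑ π ∈ univ.filter (fun π => π j = Fin.last n),
          f₁ (vv π) * f₂ (vv π) ≤ S₁ j * S₂ j := by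
      intro j
      simp only [hS₁, hS₂]
      rw [sum_filter_eq j (fun π => f₁ (vv π) * f₂ (vv π)),
        sum_filter_eq j (fun π => f₁ (vv π)), sum_filter_eq j (fun π => f₂ (vv π))]
      simp only [vv_Φ]
      have hdisj' : Disjoint ((J₁.erase j).image (rr j)) ((J₂.erase j).image (rr j)) := by
        rw [Finset.disjoint_left]
        rintro a ha hb
        obtain ⟨i₁, hi₁, rfl⟩ := Finset.mem_image.mp ha
        obtain ⟨i₂, hi₂, he⟩ := Finset.mem_image.mp hb
        have h₁j := (Finset.mem_erase.mp hi₁).1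
        have h₂j := (Finset.mem_erase.mp hi₂).1
        have := rr_injOn h₂j h₁j he
        subst this
        exact Finset.disjoint_left.mp hdisj (Finset.mem_erase.mp hi₁).2
          (Finset.mem_erase.mp hi₂).2
      have hdep : ∀ (f : (Fin (n+1) → ℝ) → ℝ) (J : Finset (Fin (n+1))), DepOn f J →
          DepOn (fun w => f (KK j w)) ((J.erase j).image (rr j)) := by
        intro f J hd x y hxy
        refine hd _ _ fun i hi => ?_
        by_cases hij : i = j
        · subst hij; simp [KK]
        · simp only [KK, if_neg hij]
          exact hxy _ (Finset.mem_image.mpr ⟨i, Finset.mem_erase.mpr ⟨hij, hi⟩, rfl⟩)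
      exact IH ((J₁.erase j).image (rr j)) ((J₂.erase j).image (rr j)) hdisj'
        (fun w => f₁ (KK j w)) (fun w => f₂ (KK j w))
        (hm₁.comp (KK_mono j)) (hm₂.comp (KK_mono j))
        (hdep f₁ J₁ hd₁) (hdep f₂ J₂ hd₂)
    -- structure of S₁, S₂
    have hS₁const : ∀ j ∉ J₁, S₁ j = S₁ j₂ := fun j hj => S_eq hd₁ hj hj₂n₁
    have hS₂const : ∀ j ∉ J₂, S₂ j = S₂ j₁ := fun j hj => S_eq hd₂ hj hj₁n₂
    have hS₁ge : ∀ j, S₁ j₂ ≤ S₁ j := by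
      intro j
      by_cases hj : j ∈ J₁
      · exact S_le hm₁ hd₁ hj hj₂n₁
      · exact le_of_eq (hS₁const j hj).symm
    have hS₂ge : ∀ j, S₂ j₁ ≤ S₂ j := by
      intro j
      by_cases hj : j ∈ J₂
      · exact S_le hm₂ hd₂ hj hj₁n₂
      · exact le_of_eq (hS₂const j hj).symm
    set c₁ := S₁ j₂ with hc₁
    set c₂ := S₂ j₁ with hc₂
    have hzero : ∀ j, (S₁ j - c₁) * (S₂ j - c₂) = 0 := by
      intro j
      by_cases hj : j ∈ J₁
      · have : j ∉ J₂ := fun h => Finset.disjoint_left.mp hdisj hj h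
        rw [hS₂const j this]; ring
      · rw [hS₁const j hj]; ring
    have hD₁ : (0:ℝ) ≤ ∑ j, (S₁ j - c₁) :=
      Finset.sum_nonneg fun j _ => sub_nonneg.mpr (hS₁ge j)
    have hD₂ : (0:ℝ) ≤ ∑ j, (S₂ j - c₂) :=
      Finset.sum_nonneg fun j _ => sub_nonneg.mpr (hS₂ge j)
    -- the final quadratic inequality
    have hquad : ((n+1 : ℕ) : ℝ) * ∑ j, S₁ j * S₂ j ≤ (∑ j, S₁ j) * ∑ j, S₂ j := by
      set D₁ := ∑ j, (S₁ j - c₁) with hD₁d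
      set D₂ := ∑ j, (S₂ j - c₂) with hD₂d
      have e₁ : ∑ j, S₁ j = ((n+1 : ℕ) : ℝ) * c₁ + D₁ := by
        rw [hD₁d, Finset.sum_sub_distrib, Finset.sum_const, Finset.card_univ,
          Fintype.card_fin, nsmul_eq_mul]
        ring
      have e₂ : ∑ j, S₂ j = ((n+1 : ℕ) : ℝ) * c₂ + D₂ := by
        rw [hD₂d, Finset.sum_sub_distrib, Finset.sum_const, Finset.card_univ,
          Fintype.card_fin, nsmul_eq_mul]
        ring
      have e₃ : ∑ j, S₁ j * S₂ j
          = ((n+1 : ℕ) : ℝ) * (c₁ * c₂) + c₁ * D₂ + c₂ * D₁ := by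
        have : ∀ j : Fin (n+1), S₁ j * S₂ j
            = c₁ * c₂ + c₁ * (S₂ j - c₂) + c₂ * (S₁ j - c₁)
              + (S₁ j - c₁) * (S₂ j - c₂) := fun j => by ring
        rw [Finset.sum_congr rfl fun j _ => this j]
        simp only [Finset.sum_add_distrib]
        rw [Finset.sum_congr rfl fun j _ => hzero j]
        rw [Finset.sum_const, Finset.card_univ, Fintype.card_fin, nsmul_eq_mul,
          ← Finset.mul_sum, ← Finset.mul_sum, ← hD₁d, ← hD₂d]
        simp
      rw [e₁, e₂, e₃]
      nlinarith [mul_nonneg hD₁ hD₂, (by positivity : (0:ℝ) ≤ ((n+1:ℕ):ℝ))]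
    -- put everything together
    calc ((n+1).factorial : ℝ) * ∑ π : Equiv.Perm (Fin (n+1)), f₁ (vv π) * f₂ (vv π)
        = ((n+1:ℕ) : ℝ) * ∑ j : Fin (n+1), (n.factorial : ℝ)
            * ∑ π ∈ univ.filter (fun π => π j = Fin.last n), f₁ (vv π) * f₂ (vv π) := by
          rw [sum_partition (fun π => f₁ (vv π) * f₂ (vv π)), ← Finset.mul_sum]
          rw [Nat.factorial_succ]
          push_cast
          ring
      _ ≤ ((n+1:ℕ) : ℝ) * ∑ j : Fin (n+1), S₁ j * S₂ j := by
          refine mul_le_mul_of_nonneg_left (Finset.sum_le_sum fun j _ => hstep j) ?_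
          positivity
      _ ≤ (∑ j, S₁ j) * ∑ j, S₂ j := hquad
      _ = (∑ π : Equiv.Perm (Fin (n+1)), f₁ (vv π))
            * ∑ π : Equiv.Perm (Fin (n+1)), f₂ (vv π) := by
          rw [← sum_partition (fun π => f₁ (vv π)), ← sum_partition (fun π => f₂ (vv π))]

/-! ### Measure-theoretic layer -/

section MeasureLayer

instance permMSC {m : ℕ} : MeasurableSingletonClass (Equiv.Perm (Fin m)) :=
  ⟨fun _ => MeasurableSpace.measurableSet_top⟩

instance permDiscrete {m : ℕ} : DiscreteMeasurableSpace (Equiv.Perm (Fin m)) :=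
  ⟨fun _ => MeasurableSpace.measurableSet_top⟩

variable {E : Type*} [MeasurableSpace E] {ι : Type*}

/-- Negative association of the (possibly infinite) family `X` of real random variables
under the law `ρ`, restricted to bounded monotone test functions. -/
def NAfam (ρ : Measure E) (X : ι → E → ℝ) : Prop :=
  ∀ J₁ J₂ : Finset ι, Disjoint J₁ J₂ →
  ∀ f₁ f₂ : (ι → ℝ) → ℝ, Monotone f₁ → Monotone f₂ → Measurable f₁ → Measurable f₂ →
  DepOn f₁ J₁ → DepOn f₂ J₂ →
  (∃ C, ∀ y, |f₁ y| ≤ C) → (∃ C, ∀ y, |f₂ y| ≤ C) →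
  covar ρ (fun e => f₁ fun i => X i e) (fun e => f₂ fun i => X i e) ≤ 0

lemma integrable_of_bdd {ρ : Measure E} [IsFiniteMeasure ρ] {g : E → ℝ} (hg : Measurable g)
    {C : ℝ} (hC : ∀ e, |g e| ≤ C) : Integrable g ρ :=
  ⟨hg.aestronglyMeasurable,
    HasFiniteIntegral.of_bounded (C := C)
      (Filter.Eventually.of_forall fun e => by simpa [Real.norm_eq_abs] using hC e)⟩

lemma covar_const_left (ρ : Measure E) [IsProbabilityMeasure ρ] (c : ℝ) (g : E → ℝ) :
    covar ρ (fun _ => c) g = 0 := by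
  simp only [covar, integral_const_mul, integral_const, measure_univ, probReal_univ, ENNReal.toReal_one,
    smul_eq_mul, one_mul]
  ring

lemma covar_const_right (ρ : Measure E) [IsProbabilityMeasure ρ] (c : ℝ) (g : E → ℝ) :
    covar ρ g (fun _ => c) = 0 := by
  have : (fun ω => g ω * c) = fun ω => c * g ω := by funext ω; ring
  simp only [covar, this, integral_const_mul, integral_const, measure_univ, probReal_univ,
    ENNReal.toReal_one, smul_eq_mul, one_mul]
  ring

/-- A component all of whose coordinates except possibly one are constants is NA. -/
lemma NAfam_single (ρ : Measure E) [IsProbabilityMeasure ρ] (X : ι → E → ℝ) (i₀ : ι)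
    (hconst : ∀ i, i ≠ i₀ → ∀ e e', X i e = X i e') : NAfam ρ X := by
  haveI : Nonempty E := by
    by_contra h
    rw [not_nonempty_iff] at h
    have h1 : ρ Set.univ = 1 := measure_univ
    rw [Set.univ_eq_empty_iff.mpr h, measure_empty] at h1
    exact zero_ne_one h1
  obtain ⟨e₀⟩ := (inferInstance : Nonempty E)
  intro J₁ J₂ hdisj f₁ f₂ _ _ _ _ hdep₁ hdep₂ _ _
  by_cases hi : i₀ ∈ J₁
  · have hni : i₀ ∉ J₂ := fun h => Finset.disjoint_left.mp hdisj hi h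
    have hc : ∀ e, f₂ (fun i => X i e) = f₂ (fun i => X i e₀) := by
      intro e
      refine hdep₂ _ _ fun i hij => ?_
      exact hconst i (fun h => hni (h ▸ hij)) e e₀
    have : (fun e => f₂ fun i => X i e) = fun _ => f₂ (fun i => X i e₀) := funext hc
    rw [this, covar_const_right]
  · have hc : ∀ e, f₁ (fun i => X i e) = f₁ (fun i => X i e₀) := by
      intro e
      refine hdep₁ _ _ fun i hij => ?_
      exact hconst i (fun h => hi (h ▸ hij)) e e₀
    have : (fun e => f₁ fun i => X i e) = fun _ => f₁ (fun i => X i e₀) := funext hc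
    rw [this, covar_const_left]

/-- The coordinates of a uniformly random permutation (together with constant junk
coordinates) form an NA family. -/
lemma NAfam_perm {m : ℕ} (ρ : Measure (Equiv.Perm (Fin m))) [IsProbabilityMeasure ρ]
    (hρ : ∀ π, ρ {π} = ((m.factorial : ENNReal))⁻¹)
    (X : ι → Equiv.Perm (Fin m) → ℝ) (proj : ι → Option (Fin m))
    (hlive : ∀ i j, proj i = some j → ∀ π, X i π = ((π j : ℕ) : ℝ))
    (hdead : ∀ i, proj i = none → ∀ π π', X i π = X i π')
    (hinj : ∀ i i' j, proj i = some j → proj i' = some j → i = i') :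
    NAfam ρ X := by
  classical
  intro J₁ J₂ hdisj f₁ f₂ hm₁ hm₂ _ _ hdep₁ hdep₂ _ _
  set emb : (Fin m → ℝ) → (ι → ℝ) := fun w i =>
    match proj i with
    | some j => w j
    | none => X i 1 with hemb
  have hemb_mono : Monotone emb := by
    intro w w' hw i
    simp only [hemb]
    cases hp : proj i with
    | some j => exact hw j
    | none => exact le_rfl
  have hvec : ∀ π : Equiv.Perm (Fin m), (fun i => X i π) = emb (vv π) := by
    intro π
    funext i
    simp only [hemb]
    cases hp : proj i with
    | some j => exact hlive i j hp π
    | none => exact hdead i hp π 1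
  set g₁ : (Fin m → ℝ) → ℝ := fun w => f₁ (emb w) with hg₁
  set g₂ : (Fin m → ℝ) → ℝ := fun w => f₂ (emb w) with hg₂
  set Jt₁ : Finset (Fin m) := J₁.biUnion (fun i => (proj i).toFinset) with hJt₁
  set Jt₂ : Finset (Fin m) := J₂.biUnion (fun i => (proj i).toFinset) with hJt₂
  have hdisj' : Disjoint Jt₁ Jt₂ := by
    rw [Finset.disjoint_left]
    intro j hj₁ hj₂
    obtain ⟨i₁, hi₁, hp₁⟩ := Finset.mem_biUnion.mp hj₁
    obtain ⟨i₂, hi₂, hp₂⟩ := Finset.mem_biUnion.mp hj₂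
    rw [Option.mem_toFinset, Option.mem_def] at hp₁ hp₂
    have := hinj i₁ i₂ j hp₁ hp₂
    subst this
    exact Finset.disjoint_left.mp hdisj hi₁ hi₂
  have hdep : ∀ (f : (ι → ℝ) → ℝ) (J : Finset ι) (Jt : Finset (Fin m)),
      (Jt = J.biUnion (fun i => (proj i).toFinset)) → DepOn f J →
      DepOn (fun w => f (emb w)) Jt := by
    intro f J Jt hJt hd w w' hww
    refine hd _ _ fun i hi => ?_
    simp only [hemb]
    cases hp : proj i with
    | some j =>
      refine hww j ?_
      rw [hJt]
      exact Finset.mem_biUnion.mpr ⟨i, hi, by simp [hp]⟩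
    | none => rfl
  -- integrals over the uniform measure are normalized sums
  have hint : ∀ h : Equiv.Perm (Fin m) → ℝ,
      ∫ π, h π ∂ρ = (m.factorial : ℝ)⁻¹ * ∑ π : Equiv.Perm (Fin m), h π := by
    intro h
    rw [integral_fintype (Integrable.of_finite)]
    rw [Finset.mul_sum]
    refine Finset.sum_congr rfl fun π _ => ?_
    rw [measureReal_def, hρ π, smul_eq_mul]
    congr 1
    rw [ENNReal.toReal_inv, ENNReal.toReal_natCast]
  have hcore := perm_core m Jt₁ Jt₂ hdisj' g₁ g₂ (hm₁.comp hemb_mono) (hm₂.comp hemb_mono)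
    (hdep f₁ J₁ Jt₁ hJt₁ hdep₁) (hdep f₂ J₂ Jt₂ hJt₂ hdep₂)
  have hpt₁ : ∀ π : Equiv.Perm (Fin m), (f₁ fun i => X i π) = g₁ (vv π) := by
    intro π; rw [hg₁, hvec π]
  have hpt₂ : ∀ π : Equiv.Perm (Fin m), (f₂ fun i => X i π) = g₂ (vv π) := by
    intro π; rw [hg₂, hvec π]
  simp only [covar]
  rw [hint, hint, hint]
  simp only [hpt₁, hpt₂]
  set a : ℝ := (m.factorial : ℝ) with ha
  have hapos : 0 < a := by
    rw [ha]; exact_mod_cast Nat.factorial_pos m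
  set A := ∑ π : Equiv.Perm (Fin m), g₁ (vv π) * g₂ (vv π) with hA
  set B := ∑ π : Equiv.Perm (Fin m), g₁ (vv π) with hB
  set C := ∑ π : Equiv.Perm (Fin m), g₂ (vv π) with hC
  have key : a * A ≤ B * C := hcore
  rw [sub_nonpos]
  have h1 : a⁻¹ * A = (a⁻¹ * a⁻¹) * (a * A) := by
    rw [show (a⁻¹*a⁻¹)*(a*A) = (a⁻¹*a)*(a⁻¹*A) by ring, inv_mul_cancel₀ hapos.ne', one_mul]
  have h2 : a⁻¹ * B * (a⁻¹ * C) = (a⁻¹ * a⁻¹) * (B * C) := by ring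
  rw [h1, h2]
  exact mul_le_mul_of_nonneg_left key (by positivity)

end MeasureLayer

section ProdLayer

/-- Negative association is preserved by independent products (with junk coordinates
added pointwise). -/
lemma NAfam_prod {ι E₁ E₂ : Type*} [MeasurableSpace E₁] [MeasurableSpace E₂]
    {ρ₁ : Measure E₁} {ρ₂ : Measure E₂} [IsProbabilityMeasure ρ₁] [IsProbabilityMeasure ρ₂]
    {X₁ : ι → E₁ → ℝ} {X₂ : ι → E₂ → ℝ}
    (mX₁ : ∀ i, Measurable (X₁ i)) (mX₂ : ∀ i, Measurable (X₂ i))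
    (h₁ : NAfam ρ₁ X₁) (h₂ : NAfam ρ₂ X₂) :
    NAfam (ρ₁.prod ρ₂) (fun i p => X₁ i p.1 + X₂ i p.2) := by
  intro J₁ J₂ hdisj f₁ f₂ hm₁ hm₂ hms₁ hms₂ hdep₁ hdep₂ hb₁ hb₂
  obtain ⟨C₁, hC₁⟩ := hb₁
  obtain ⟨C₂, hC₂⟩ := hb₂
  have hC₁0 : 0 ≤ C₁ := le_trans (abs_nonneg _) (hC₁ 0)
  have hC₂0 : 0 ≤ C₂ := le_trans (abs_nonneg _) (hC₂ 0)
  have hvec : Measurable (fun p : E₁ × E₂ => (fun i => X₁ i p.1 + X₂ i p.2)) :=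
    measurable_pi_lambda _ fun i =>
      ((mX₁ i).comp measurable_fst).add ((mX₂ i).comp measurable_snd)
  set g₁ : E₁ × E₂ → ℝ := fun p => f₁ (fun i => X₁ i p.1 + X₂ i p.2) with hg₁
  set g₂ : E₁ × E₂ → ℝ := fun p => f₂ (fun i => X₁ i p.1 + X₂ i p.2) with hg₂
  have hmg₁ : Measurable g₁ := hms₁.comp hvec
  have hmg₂ : Measurable g₂ := hms₂.comp hvec
  have hbg₁ : ∀ p, |g₁ p| ≤ C₁ := fun p => hC₁ _
  have hbg₂ : ∀ p, |g₂ p| ≤ C₂ := fun p => hC₂ _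
  have hig₁ : Integrable g₁ (ρ₁.prod ρ₂) := integrable_of_bdd hmg₁ hbg₁
  have hig₂ : Integrable g₂ (ρ₁.prod ρ₂) := integrable_of_bdd hmg₂ hbg₂
  have hbg₁₂ : ∀ p, |g₁ p * g₂ p| ≤ C₁ * C₂ := fun p => by
    rw [abs_mul]
    exact mul_le_mul (hbg₁ p) (hbg₂ p) (abs_nonneg _) hC₁0
  have hig₁₂ : Integrable (fun p => g₁ p * g₂ p) (ρ₁.prod ρ₂) :=
    integrable_of_bdd (hmg₁.mul hmg₂) hbg₁₂
  set G₁ : E₁ → ℝ := fun e₁ => ∫ e₂, g₁ (e₁, e₂) ∂ρ₂ with hG₁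
  set G₂ : E₁ → ℝ := fun e₁ => ∫ e₂, g₂ (e₁, e₂) ∂ρ₂ with hG₂
  have hmG₁ : Measurable G₁ := (hmg₁.stronglyMeasurable.integral_prod_right').measurable
  have hmG₂ : Measurable G₂ := (hmg₂.stronglyMeasurable.integral_prod_right').measurable
  have hbG₁ : ∀ e₁, |G₁ e₁| ≤ C₁ := by
    intro e₁
    have := norm_integral_le_of_norm_le_const (μ := ρ₂)
      (f := fun e₂ => g₁ (e₁, e₂)) (C := C₁)
      (Filter.Eventually.of_forall fun e₂ => by
        simpa [Real.norm_eq_abs] using hbg₁ (e₁, e₂))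
    simpa [Real.norm_eq_abs, measure_univ] using this
  have hbG₂ : ∀ e₁, |G₂ e₁| ≤ C₂ := by
    intro e₁
    have := norm_integral_le_of_norm_le_const (μ := ρ₂)
      (f := fun e₂ => g₂ (e₁, e₂)) (C := C₂)
      (Filter.Eventually.of_forall fun e₂ => by
        simpa [Real.norm_eq_abs] using hbg₂ (e₁, e₂))
    simpa [Real.norm_eq_abs, measure_univ] using this
  -- inner (conditional) covariance inequality
  have hinner : ∀ e₁, ∫ e₂, g₁ (e₁, e₂) * g₂ (e₁, e₂) ∂ρ₂ ≤ G₁ e₁ * G₂ e₁ := by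
    intro e₁
    have hcov := h₂ J₁ J₂ hdisj
      (fun y => f₁ (fun i => X₁ i e₁ + y i)) (fun y => f₂ (fun i => X₁ i e₁ + y i))
      (fun y y' h => hm₁ fun i => add_le_add_right (h i) _)
      (fun y y' h => hm₂ fun i => add_le_add_right (h i) _)
      (hms₁.comp (measurable_pi_lambda _ fun i =>
        measurable_const.add (measurable_pi_apply i)))
      (hms₂.comp (measurable_pi_lambda _ fun i =>
        measurable_const.add (measurable_pi_apply i)))
      (fun y y' hyy => hdep₁ _ _ fun i hi => by rw [hyy i hi])
      (fun y y' hyy => hdep₂ _ _ fun i hi => by rw [hyy i hi])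
      ⟨C₁, fun y => hC₁ _⟩ ⟨C₂, fun y => hC₂ _⟩
    simp only [covar, sub_nonpos] at hcov
    exact hcov
  -- outer covariance inequality
  have houter : ∫ e₁, G₁ e₁ * G₂ e₁ ∂ρ₁ ≤ (∫ e₁, G₁ e₁ ∂ρ₁) * ∫ e₁, G₂ e₁ ∂ρ₁ := by
    have hcov := h₁ J₁ J₂ hdisj
      (fun x => ∫ e₂, f₁ (fun i => x i + X₂ i e₂) ∂ρ₂)
      (fun x => ∫ e₂, f₂ (fun i => x i + X₂ i e₂) ∂ρ₂)
      (fun x x' hxx => by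
        refine integral_mono
          (integrable_of_bdd (hms₁.comp (measurable_pi_lambda _ fun i =>
            measurable_const.add (mX₂ i))) (fun e₂ => hC₁ _))
          (integrable_of_bdd (hms₁.comp (measurable_pi_lambda _ fun i =>
            measurable_const.add (mX₂ i))) (fun e₂ => hC₁ _))
          (fun e₂ => hm₁ fun i => add_le_add_left (hxx i) _))
      (fun x x' hxx => by
        refine integral_mono
          (integrable_of_bdd (hms₂.comp (measurable_pi_lambda _ fun i =>
            measurable_const.add (mX₂ i))) (fun e₂ => hC₂ _))
          (integrable_of_bdd (hms₂.comp (measurable_pi_lambda _ fun i =>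
            measurable_const.add (mX₂ i))) (fun e₂ => hC₂ _))
          (fun e₂ => hm₂ fun i => add_le_add_left (hxx i) _))
      (((hms₁.comp (measurable_pi_lambda
          (fun q : (ι → ℝ) × E₂ => fun i => q.1 i + X₂ i q.2) fun i =>
        ((measurable_pi_apply i).comp measurable_fst).add
          ((mX₂ i).comp measurable_snd))).stronglyMeasurable.integral_prod_right').measurable)
      (((hms₂.comp (measurable_pi_lambda
          (fun q : (ι → ℝ) × E₂ => fun i => q.1 i + X₂ i q.2) fun i =>
        ((measurable_pi_apply i).comp measurable_fst).add
          ((mX₂ i).comp measurable_snd))).stronglyMeasurable.integral_prod_right').measurable)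
      (fun x x' hxx => by
        show (∫ e₂, f₁ (fun i => x i + X₂ i e₂) ∂ρ₂)
            = ∫ e₂, f₁ (fun i => x' i + X₂ i e₂) ∂ρ₂
        have : (fun e₂ => f₁ (fun i => x i + X₂ i e₂))
            = fun e₂ => f₁ (fun i => x' i + X₂ i e₂) :=
          funext fun e₂ => hdep₁ _ _ fun i hi => by rw [hxx i hi]
        rw [this])
      (fun x x' hxx => by
        show (∫ e₂, f₂ (fun i => x i + X₂ i e₂) ∂ρ₂)
            = ∫ e₂, f₂ (fun i => x' i + X₂ i e₂) ∂ρ₂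
        have : (fun e₂ => f₂ (fun i => x i + X₂ i e₂))
            = fun e₂ => f₂ (fun i => x' i + X₂ i e₂) :=
          funext fun e₂ => hdep₂ _ _ fun i hi => by rw [hxx i hi]
        rw [this])
      ⟨C₁, fun x => by
        have := norm_integral_le_of_norm_le_const (μ := ρ₂)
          (f := fun e₂ => f₁ (fun i => x i + X₂ i e₂)) (C := C₁)
          (Filter.Eventually.of_forall fun e₂ => by
            simpa [Real.norm_eq_abs] using hC₁ (fun i => x i + X₂ i e₂))
        simpa [Real.norm_eq_abs, measure_univ] using this⟩
      ⟨C₂, fun x => by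
        have := norm_integral_le_of_norm_le_const (μ := ρ₂)
          (f := fun e₂ => f₂ (fun i => x i + X₂ i e₂)) (C := C₂)
          (Filter.Eventually.of_forall fun e₂ => by
            simpa [Real.norm_eq_abs] using hC₂ (fun i => x i + X₂ i e₂))
        simpa [Real.norm_eq_abs, measure_univ] using this⟩
    simp only [covar, sub_nonpos] at hcov
    exact hcov
  -- put everything together via Fubini
  simp only [covar, sub_nonpos]
  have e₀ : ∫ p, g₁ p * g₂ p ∂(ρ₁.prod ρ₂)
      = ∫ e₁, (∫ e₂, g₁ (e₁, e₂) * g₂ (e₁, e₂) ∂ρ₂) ∂ρ₁ :=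
    integral_prod _ hig₁₂
  have e₁ : ∫ p, g₁ p ∂(ρ₁.prod ρ₂) = ∫ e₁, G₁ e₁ ∂ρ₁ := integral_prod _ hig₁
  have e₂ : ∫ p, g₂ p ∂(ρ₁.prod ρ₂) = ∫ e₁, G₂ e₁ ∂ρ₁ := integral_prod _ hig₂
  have step1 : ∫ e₁, (∫ e₂, g₁ (e₁, e₂) * g₂ (e₁, e₂) ∂ρ₂) ∂ρ₁
      ≤ ∫ e₁, G₁ e₁ * G₂ e₁ ∂ρ₁ := by
    refine integral_mono ?_ ?_ hinner
    · exact hig₁₂.integral_prod_left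
    · refine integrable_of_bdd (hmG₁.mul hmG₂) (C := C₁ * C₂) fun e₁ => ?_
      rw [abs_mul]
      exact mul_le_mul (hbG₁ e₁) (hbG₂ e₁) (abs_nonneg _) hC₁0
  calc ∫ p, g₁ p * g₂ p ∂(ρ₁.prod ρ₂)
      = ∫ e₁, (∫ e₂, g₁ (e₁, e₂) * g₂ (e₁, e₂) ∂ρ₂) ∂ρ₁ := e₀
    _ ≤ ∫ e₁, G₁ e₁ * G₂ e₁ ∂ρ₁ := step1
    _ ≤ (∫ e₁, G₁ e₁ ∂ρ₁) * ∫ e₁, G₂ e₁ ∂ρ₁ := houter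
    _ = (∫ p, g₁ p ∂(ρ₁.prod ρ₂)) * ∫ p, g₂ p ∂(ρ₁.prod ρ₂) := by rw [e₁, e₂]

end ProdLayer

section Assembly

variable {Ω : Type*} [MeasurableSpace Ω] {k : ℕ}

/-- global index type for the real coordinates -/
abbrev Idx (k : ℕ) := Fin k ⊕ (ℕ × Fin k)

/-- real coordinates attached to a single component -/
def Xcomp (k : ℕ) : (c : Fin k ⊕ ℕ) → Idx k → ilhsβ k c → ℝ
  | Sum.inl jc => fun i x =>
      match i with
      | Sum.inl j' => if j' = jc then x else 0
      | Sum.inr _ => 0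
  | Sum.inr tc => fun i π =>
      match i with
      | Sum.inl _ => 0
      | Sum.inr (t', j) =>
          if t' = tc then ((((show Equiv.Perm (Fin k) from π) j : Fin k) : ℕ) : ℝ) else 0

lemma meas_Xcomp (c : Fin k ⊕ ℕ) (i : Idx k) : Measurable (Xcomp k c i) := by
  cases c with
  | inl jc =>
    cases i with
    | inl j' =>
      by_cases h : j' = jc
      · have hX : Xcomp k (Sum.inl jc) (Sum.inl j') = fun x => x := by funext x; simp [Xcomp, h]; rfl
        rw [hX]; exact (measurable_id : Measurable fun x : ℝ => x)
      · simpa [Xcomp, h] using (measurable_const : Measurable fun _ : ℝ => (0:ℝ))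
    | inr p => exact measurable_const
  | inr tc => exact Measurable.of_discrete (α := Equiv.Perm (Fin k))

def Etype (k : ℕ) : List (Fin k ⊕ ℕ) → Type
  | [] => Unit
  | c :: L => ilhsβ k c × Etype k L

instance EtypeMS (k : ℕ) : ∀ L, MeasurableSpace (Etype k L)
  | [] => (inferInstance : MeasurableSpace Unit)
  | _ :: L => @Prod.instMeasurableSpace _ _ _ (EtypeMS k L)

def Jmap (U0 : Fin k → Ω → ℝ) (σ : ℕ → Ω → Equiv.Perm (Fin k)) :
    ∀ L : List (Fin k ⊕ ℕ), Ω → Etype k L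
  | [] => fun _ => ()
  | c :: L => fun ω => (ilhsFam U0 σ c ω, Jmap U0 σ L ω)

def Xfam (k : ℕ) : ∀ L : List (Fin k ⊕ ℕ), Idx k → Etype k L → ℝ
  | [] => fun _ _ => 0
  | c :: L => fun i p => Xcomp k c i p.1 + Xfam k L i p.2

variable {U0 : Fin k → Ω → ℝ} {σ : ℕ → Ω → Equiv.Perm (Fin k)}

lemma meas_fam (hU : ∀ j, Measurable (U0 j)) (hσm : ∀ t, Measurable (σ t)) :
    ∀ c, Measurable (ilhsFam U0 σ c) := by
  rintro (j | t)
  · exact hU j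
  · exact hσm t

lemma meas_Jmap (hU : ∀ j, Measurable (U0 j)) (hσm : ∀ t, Measurable (σ t)) :
    ∀ L, Measurable (Jmap U0 σ L)
  | [] => measurable_const
  | c :: L => (meas_fam hU hσm c).prodMk (meas_Jmap hU hσm L)

lemma meas_Xfam : ∀ (L) (i : Idx k), Measurable (Xfam k L i)
  | [], _ => measurable_const
  | c :: L, i =>
    ((meas_Xcomp c i).comp measurable_fst).add ((meas_Xfam L i).comp measurable_snd)

/-- packing the tuple over a finset into the nested product -/
def packL (k : ℕ) : ∀ L : List (Fin k ⊕ ℕ),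
    (∀ i : {x // x ∈ L.toFinset}, ilhsβ k i.1) → Etype k L
  | [] => fun _ => ()
  | c :: L => fun v =>
      (v ⟨c, by simp⟩,
        packL k L (fun i => v ⟨i.1, by
          have := i.2
          simp only [List.toFinset_cons, Finset.mem_insert]
          right
          exact this⟩))

lemma meas_packL : ∀ L : List (Fin k ⊕ ℕ), Measurable (packL k L)
  | [] => measurable_const
  | c :: L =>
    (measurable_pi_apply _).prodMk
      ((meas_packL L).comp (measurable_pi_lambda _ fun _ => measurable_pi_apply _))

lemma Jmap_eq_pack : ∀ L (ω : Ω),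
    Jmap U0 σ L ω = packL k L (fun i => ilhsFam U0 σ i.1 ω)
  | [], ω => rfl
  | c :: L, ω => by
    simp only [Jmap, packL]
    exact congrArg _ (Jmap_eq_pack L ω)

/-- dead coordinates vanish -/
lemma Xfam_dead : ∀ (L : List (Fin k ⊕ ℕ)) (i : Idx k),
    (∀ c ∈ L, ∀ x, Xcomp k c i x = 0) → ∀ e, Xfam k L i e = 0
  | [], _, _, _ => rfl
  | c :: L, i, h, e => by
    simp only [Xfam]
    rw [h c List.mem_cons_self e.1,
      Xfam_dead L i (fun c' hc' => h c' (List.mem_cons_of_mem _ hc')) e.2]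
    ring

lemma Xcomp_dead_inl {j : Fin k} {c : Fin k ⊕ ℕ} (h : c ≠ Sum.inl j) :
    ∀ x, Xcomp k c (Sum.inl j) x = 0 := by
  intro x
  cases c with
  | inl jc =>
    have : j ≠ jc := fun he => h (by rw [he])
    simp [Xcomp, this]
  | inr tc => simp [Xcomp]

lemma Xcomp_dead_inr {t : ℕ} {j : Fin k} {c : Fin k ⊕ ℕ} (h : c ≠ Sum.inr t) :
    ∀ x, Xcomp k c (Sum.inr (t, j)) x = 0 := by
  intro x
  cases c with
  | inl jc => simp [Xcomp]
  | inr tc =>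
    have : t ≠ tc := fun he => h (by rw [he])
    simp [Xcomp, this]

lemma Xfam_live_inl {j : Fin k} : ∀ (L : List (Fin k ⊕ ℕ)), L.Nodup →
    Sum.inl j ∈ L → ∀ ω, Xfam k L (Sum.inl j) (Jmap U0 σ L ω) = U0 j ω := by
  intro L
  induction L with
  | nil => intro _ h; simp at h
  | cons c L IH =>
    intro hnd hmem ω
    simp only [Xfam, Jmap]
    rcases List.mem_cons.mp hmem with hc | hc
    · subst hc
      have hnotin : Sum.inl j ∉ L := (List.nodup_cons.mp hnd).1
      rw [Xfam_dead L _ (fun c' hc' => Xcomp_dead_inl (fun he => hnotin (he ▸ hc'))) _]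
      simp [Xcomp, ilhsFam]
    · rw [IH (List.nodup_cons.mp hnd).2 hc ω]
      by_cases hcj : c = Sum.inl j
      · exact absurd (hcj ▸ hc) (List.nodup_cons.mp hnd).1
      · rw [Xcomp_dead_inl hcj]; ring

lemma Xfam_live_inr {t : ℕ} {j : Fin k} : ∀ (L : List (Fin k ⊕ ℕ)), L.Nodup →
    Sum.inr t ∈ L → ∀ ω,
      Xfam k L (Sum.inr (t, j)) (Jmap U0 σ L ω) = ((σ t ω j : ℕ) : ℝ) := by
  intro L
  induction L with
  | nil => intro _ h; simp at h
  | cons c L IH =>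
    intro hnd hmem ω
    simp only [Xfam, Jmap]
    rcases List.mem_cons.mp hmem with hc | hc
    · subst hc
      have hnotin : Sum.inr t ∉ L := (List.nodup_cons.mp hnd).1
      rw [Xfam_dead L _ (fun c' hc' => Xcomp_dead_inr (fun he => hnotin (he ▸ hc'))) _]
      simp [Xcomp, ilhsFam]
    · rw [IH (List.nodup_cons.mp hnd).2 hc ω]
      by_cases hct : c = Sum.inr t
      · exact absurd (hct ▸ hc) (List.nodup_cons.mp hnd).1
      · rw [Xcomp_dead_inr hct]; ring

end Assembly

section Law

lemma NAfam_const {E ι : Type*} [MeasurableSpace E] (ρ : Measure E) [IsProbabilityMeasure ρ]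
    (X : ι → E → ℝ) (hconst : ∀ i e e', X i e = X i e') : NAfam ρ X := by
  haveI : Nonempty E := by
    by_contra h
    rw [not_nonempty_iff] at h
    have h1 : ρ Set.univ = 1 := measure_univ
    rw [Set.univ_eq_empty_iff.mpr h, measure_empty] at h1
    exact zero_ne_one h1
  obtain ⟨e₀⟩ := (inferInstance : Nonempty E)
  intro J₁ J₂ _ f₁ f₂ _ _ _ _ _ _ _ _
  have : (fun e => f₁ fun i => X i e) = fun _ => f₁ (fun i => X i e₀) :=
    funext fun e => congrArg f₁ (funext fun i => hconst i e e₀)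
  rw [this, covar_const_left]

variable {Ω : Type*} [MeasurableSpace Ω] {k : ℕ}
variable {μ : Measure Ω} [IsProbabilityMeasure μ]
variable {U0 : Fin k → Ω → ℝ} {σ : ℕ → Ω → Equiv.Perm (Fin k)}

lemma indep_head (hInd : iIndepFun (m := ilhsβMeasurableSpace k) (ilhsFam U0 σ) μ)
    (hmeas : ∀ c, Measurable (ilhsFam U0 σ c)) {c : Fin k ⊕ ℕ} {L : List (Fin k ⊕ ℕ)}
    (hc : c ∉ L) :
    IndepFun (ilhsFam U0 σ c) (Jmap U0 σ L) μ := by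
  classical
  have hdisj : Disjoint ({c} : Finset (Fin k ⊕ ℕ)) L.toFinset := by
    rw [Finset.disjoint_left]
    intro a ha hb
    rw [Finset.mem_singleton] at ha
    subst ha
    exact hc (List.mem_toFinset.mp hb)
  have base := hInd.indepFun_finset {c} L.toFinset hdisj hmeas
  have hφ : Measurable (fun v : (∀ i : {x // x ∈ ({c} : Finset (Fin k ⊕ ℕ))}, ilhsβ k i.1) =>
      v ⟨c, Finset.mem_singleton_self c⟩) := measurable_pi_apply _
  have hcomp := base.comp hφ (meas_packL (k := k) L)
  have hJ : Jmap U0 σ L = fun ω => packL k L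
      (fun i : {x // x ∈ L.toFinset} => ilhsFam U0 σ i.1 ω) :=
    funext fun ω => Jmap_eq_pack L ω
  rw [hJ]
  exact hcomp

lemma map_cons (hInd : iIndepFun (m := ilhsβMeasurableSpace k) (ilhsFam U0 σ) μ)
    (hmeas : ∀ c, Measurable (ilhsFam U0 σ c))
    (hU : ∀ j, Measurable (U0 j)) (hσm : ∀ t, Measurable (σ t))
    {c : Fin k ⊕ ℕ} {L : List (Fin k ⊕ ℕ)} (hc : c ∉ L) :
    μ.map (Jmap U0 σ (c :: L))
      = (μ.map (ilhsFam U0 σ c)).prod (μ.map (Jmap U0 σ L)) :=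
  (indepFun_iff_map_prod_eq_prod_map_map (hmeas c).aemeasurable
    (meas_Jmap hU hσm L).aemeasurable).mp (indep_head hInd hmeas hc)

lemma NAfam_comp (h : IsILHS μ U0 σ) (c : Fin k ⊕ ℕ) :
    NAfam (μ.map (ilhsFam U0 σ c)) (Xcomp k c) := by
  obtain ⟨hU, hσm, hUlaw, hσlaw, hInd⟩ := h
  cases c with
  | inl j =>
    show NAfam (μ.map (U0 j)) (Xcomp k (Sum.inl j))
    rw [hUlaw j]
    haveI : IsProbabilityMeasure (volume.restrict (Set.Ioo (0:ℝ) 1)) := by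
      constructor
      rw [Measure.restrict_apply MeasurableSet.univ, Set.univ_inter, Real.volume_Ioo]
      norm_num
    refine NAfam_single _ _ (Sum.inl j) ?_
    rintro (j' | p) hne e e'
    · have hjj : j' ≠ j := fun hh => hne (by rw [hh])
      simp [Xcomp, hjj]
    · simp [Xcomp]
  | inr t =>
    show NAfam (μ.map (σ t)) (Xcomp k (Sum.inr t))
    haveI : IsProbabilityMeasure (μ.map (σ t)) :=
      Measure.isProbabilityMeasure_map (hσm t).aemeasurable
    refine NAfam_perm (μ.map (σ t)) ?_ _
      (fun i => match i with
        | Sum.inl _ => none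
        | Sum.inr (t', j) => if t' = t then some j else none) ?_ ?_ ?_
    · intro π
      rw [Measure.map_apply (hσm t) (MeasurableSet.singleton π)]
      exact hσlaw t π
    · rintro (j' | ⟨t', j⟩) j0 hp π
      · simp at hp
      · by_cases hh : t' = t
        · subst hh
          simp only [if_pos rfl] at hp
          obtain rfl := Option.some.inj hp
          simp [Xcomp]
        · simp [hh] at hp
    · rintro (j' | ⟨t', j⟩) hp π π'
      · simp [Xcomp]
      · by_cases hh : t' = t
        · subst hh; simp at hp
        · simp [Xcomp, hh]
    · rintro (j' | ⟨t₁, j₁⟩) i' j0 hp hp'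
      · simp at hp
      · rcases i' with j'' | ⟨t₂, j₂⟩
        · simp at hp'
        · by_cases h1 : t₁ = t
          · by_cases h2 : t₂ = t
            · subst h1; subst h2
              simp only [if_pos rfl] at hp hp'
              obtain rfl := Option.some.inj hp
              obtain rfl := Option.some.inj hp'
              rfl
            · simp [h2] at hp'
          · simp [h1] at hp

lemma NAfam_L (h : IsILHS μ U0 σ) :
    ∀ L : List (Fin k ⊕ ℕ), L.Nodup → NAfam (μ.map (Jmap U0 σ L)) (Xfam k L) := by
  obtain ⟨hU, hσm, hUlaw, hσlaw, hInd⟩ := h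
  intro L
  induction L with
  | nil =>
    intro _
    haveI : IsProbabilityMeasure (μ.map (Jmap U0 σ ([] : List (Fin k ⊕ ℕ)))) :=
      Measure.isProbabilityMeasure_map (meas_Jmap hU hσm _).aemeasurable
    exact NAfam_const _ _ (fun i e e' => rfl)
  | cons c L IH =>
    intro hnd
    obtain ⟨hc, hnd'⟩ := List.nodup_cons.mp hnd
    rw [map_cons hInd (meas_fam hU hσm) hU hσm hc]
    haveI : IsProbabilityMeasure (μ.map (ilhsFam U0 σ c)) :=
      Measure.isProbabilityMeasure_map (meas_fam hU hσm c).aemeasurable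
    haveI : IsProbabilityMeasure (μ.map (Jmap U0 σ L)) :=
      Measure.isProbabilityMeasure_map (meas_Jmap hU hσm L).aemeasurable
    exact NAfam_prod (meas_Xcomp c) (meas_Xfam L)
      (NAfam_comp ⟨hU, hσm, hUlaw, hσlaw, hInd⟩ c) (IH hnd')

/-- transfer of covariance along a measurable map -/
lemma covar_map {E : Type*} [MeasurableSpace E] (μ' : Measure Ω) {φ : Ω → E}
    (hφ : Measurable φ) {g h : E → ℝ} (hg : Measurable g) (hh : Measurable h) :
    covar (μ'.map φ) g h = covar μ' (fun ω => g (φ ω)) (fun ω => h (φ ω)) := by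
  simp only [covar]
  rw [integral_map (f := fun x => g x * h x) hφ.aemeasurable (hg.mul hh).aestronglyMeasurable,
    integral_map hφ.aemeasurable hg.aestronglyMeasurable,
    integral_map hφ.aemeasurable hh.aestronglyMeasurable]

end Law

section Final

variable {Ω : Type*} [MeasurableSpace Ω] {k : ℕ}
variable {U0 : Fin k → Ω → ℝ} {σ : ℕ → Ω → Equiv.Perm (Fin k)}

/-- the ILHS value as a function of the coordinates -/
noncomputable def psi (k : ℕ) (t : ℕ) (j : Fin k) (y : Idx k → ℝ) : ℝ :=
  match t with
  | 0 => y (Sum.inl j)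
  | t + 1 => (y (Sum.inr (t, j)) + psi k t j y) / (k : ℝ)

lemma psi_mono (hk : 0 < k) (t : ℕ) (j : Fin k) : Monotone (psi k t j) := by
  induction t with
  | zero => exact fun y y' h => h _
  | succ t IH =>
    intro y y' h
    simp only [psi]
    have hkr : (0:ℝ) < (k:ℝ) := by exact_mod_cast hk
    exact (div_le_div_iff_of_pos_right hkr).mpr (add_le_add (h _) (IH h))

lemma psi_meas (t : ℕ) (j : Fin k) : Measurable (psi k t j) := by
  induction t with
  | zero => exact measurable_pi_apply _
  | succ t IH => exact ((measurable_pi_apply _).add IH).div_const _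

/-- block of coordinates that `psi k t j` depends on -/
def blk (k t : ℕ) (j : Fin k) : Finset (Idx k) :=
  insert (Sum.inl j) ((Finset.range t).image fun s => Sum.inr (s, j))

lemma blk_mono {t t' : ℕ} (h : t ≤ t') {j : Fin k} : blk k t j ⊆ blk k t' j := by
  intro a ha
  simp only [blk, Finset.mem_insert, Finset.mem_image, Finset.mem_range] at *
  rcases ha with h1 | ⟨s, hs, rfl⟩
  · exact Or.inl h1
  · exact Or.inr ⟨s, lt_of_lt_of_le hs h, rfl⟩

lemma psi_dep (t : ℕ) (j : Fin k) : DepOn (psi k t j) (blk k t j) := by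
  induction t with
  | zero =>
    intro x y hxy
    exact hxy _ (Finset.mem_insert_self _ _)
  | succ t IH =>
    intro x y hxy
    simp only [psi]
    have hmem : (Sum.inr (t, j) : Idx k) ∈ blk k (t+1) j := by
      simp only [blk, Finset.mem_insert, Finset.mem_image, Finset.mem_range]
      exact Or.inr ⟨t, Nat.lt_succ_self t, rfl⟩
    rw [hxy _ hmem, IH x y fun i hi => hxy i (blk_mono (Nat.le_succ t) hi)]

lemma blk_disj {t t' : ℕ} {j j' : Fin k} (h : j ≠ j') :
    Disjoint (blk k t j) (blk k t' j') := by
  rw [Finset.disjoint_left]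
  intro a ha hb
  simp only [blk, Finset.mem_insert, Finset.mem_image, Finset.mem_range] at ha hb
  rcases ha with rfl | ⟨s, _, rfl⟩
  · rcases hb with hb | ⟨s', _, hb⟩
    · exact h (Sum.inl_injective hb)
    · exact absurd hb (by simp)
  · rcases hb with hb | ⟨s', _, hb⟩
    · exact absurd hb (by simp)
    · have h2 := Sum.inr_injective hb
      exact h (congrArg Prod.snd h2).symm

lemma meas_ilhs (hU : ∀ j, Measurable (U0 j)) (hσm : ∀ t, Measurable (σ t))
    (t : ℕ) (j : Fin k) : Measurable (fun ω => ilhs U0 σ t j ω) := by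
  induction t with
  | zero => exact hU j
  | succ t IH =>
    simp only [ilhs]
    have h1 : Measurable (fun ω => ((σ t ω j : ℕ) : ℝ)) :=
      (Measurable.of_discrete (f := fun π : Equiv.Perm (Fin k) => ((π j : ℕ) : ℝ))).comp
        (hσm t)
    exact (h1.add IH).div_const _

lemma psi_ilhs : ∀ (t : ℕ) (j : Fin k) (ω : Ω) (L : List (Fin k ⊕ ℕ)), L.Nodup →
    Sum.inl j ∈ L → (∀ s, s < t → Sum.inr s ∈ L) →
    ilhs U0 σ t j ω = psi k t j (fun i => Xfam k L i (Jmap U0 σ L ω)) := by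
  intro t
  induction t with
  | zero =>
    intro j ω L hnd hj _
    exact (Xfam_live_inl L hnd hj ω).symm
  | succ t IH =>
    intro j ω L hnd hj ht
    simp only [ilhs, psi]
    rw [Xfam_live_inr L hnd (ht t (Nat.lt_succ_self t)) ω,
      IH j ω L hnd hj fun s hs => ht s (Nat.lt_succ_of_lt hs)]

/-- truncation -/
def trc (N : ℕ) (a : ℝ) : ℝ := max (-(N:ℝ)) (min (N:ℝ) a)

lemma trc_mono (N : ℕ) : Monotone (trc N) :=
  fun _ _ h => max_le_max le_rfl (min_le_min le_rfl h)

lemma trc_meas (N : ℕ) : Measurable (trc N) :=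
  measurable_const.max (measurable_const.min measurable_id)

lemma trc_bd (N : ℕ) (a : ℝ) : |trc N a| ≤ (N:ℝ) := by
  rw [abs_le]
  constructor
  · exact le_max_left _ _
  · exact max_le (neg_le_self (by positivity)) (min_le_left _ _)

lemma trc_abs_le (N : ℕ) (a : ℝ) : |trc N a| ≤ |a| := by
  rw [abs_le]
  constructor
  · refine le_trans (le_min ?_ ?_) (le_max_right _ _)
    · exact le_trans (neg_nonpos.mpr (abs_nonneg a)) (by positivity)
    · exact neg_abs_le a
  · exact max_le (le_trans (neg_nonpos.mpr (by positivity)) (abs_nonneg a))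
      (le_trans (min_le_right _ _) (le_abs_self a))

lemma trc_tendsto (a : ℝ) :
    Filter.Tendsto (fun N : ℕ => trc N a) Filter.atTop (nhds a) := by
  refine tendsto_atTop_of_eventually_const (i₀ := ⌈|a|⌉₊) fun N hN => ?_
  have h1 : |a| ≤ (N:ℝ) := by
    have := Nat.ceil_le.mp hN
    exact_mod_cast this
  have h2 : a ≤ (N:ℝ) := le_trans (le_abs_self a) h1
  have h3 : -(N:ℝ) ≤ a := le_trans (neg_le_neg h1) (neg_abs_le a)
  rw [trc, min_eq_right h2, max_eq_right h3]

end Final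

section Main

theorem main_negAssoc {Ω : Type*} [MeasurableSpace Ω] (μ : Measure Ω)
    [IsProbabilityMeasure μ] {k : ℕ} (hk : 2 ≤ k)
    (U0 : Fin k → Ω → ℝ) (σ : ℕ → Ω → Equiv.Perm (Fin k)) (h : IsILHS μ U0 σ) :
    ∀ tv : Fin k → ℕ, NegAssoc μ (fun j ω => ilhs U0 σ (tv j) j ω) := by
  classical
  intro tv A₁ A₂ hA f₁ f₂ hm₁ hm₂ hms₁ hms₂ hi₁ hi₂ hi₁₂
  obtain ⟨hU, hσm, hUlaw, hσlaw, hInd⟩ := h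
  have hk0 : 0 < k := lt_of_lt_of_le two_pos hk
  set g₁ : Ω → ℝ := fun ω => f₁ (fun i : {i // i ∈ A₁} => ilhs U0 σ (tv i.1) i.1 ω) with hg₁
  set g₂ : Ω → ℝ := fun ω => f₂ (fun i : {i // i ∈ A₂} => ilhs U0 σ (tv i.1) i.1 ω) with hg₂
  show covar μ g₁ g₂ ≤ 0
  have hmV : ∀ j : Fin k, Measurable (fun ω => ilhs U0 σ (tv j) j ω) :=
    fun j => meas_ilhs hU hσm (tv j) j
  have hmg₁ : Measurable g₁ := hms₁.comp (measurable_pi_lambda _ fun i => hmV i.1)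
  have hmg₂ : Measurable g₂ := hms₂.comp (measurable_pi_lambda _ fun i => hmV i.1)
  have hI₁ : Integrable g₁ μ := hi₁
  have hI₂ : Integrable g₂ μ := hi₂
  have hI₁₂ : Integrable (fun ω => g₁ ω * g₂ ω) μ := hi₁₂
  -- step 1: the result for truncated (hence bounded) test functions
  have key : ∀ N : ℕ,
      covar μ (fun ω => trc N (g₁ ω)) (fun ω => trc N (g₂ ω)) ≤ 0 := by
    intro N
    set T := Finset.univ.sup tv with hT
    set L : List (Fin k ⊕ ℕ) :=
      ((List.finRange k).map Sum.inl) ++ ((List.range T).map Sum.inr) with hL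
    have hnd : L.Nodup := by
      refine List.Nodup.append ((List.nodup_finRange k).map Sum.inl_injective)
        (List.nodup_range.map Sum.inr_injective) ?_
      intro a ha hb
      obtain ⟨x, _, rfl⟩ := List.mem_map.mp ha
      obtain ⟨y, _, hxy⟩ := List.mem_map.mp hb
      exact absurd hxy (by simp)
    have hinlL : ∀ j : Fin k, Sum.inl j ∈ L := fun j =>
      List.mem_append_left _ (List.mem_map.mpr ⟨j, List.mem_finRange j, rfl⟩)
    have hinrL : ∀ (i : Fin k), ∀ s < tv i, Sum.inr s ∈ L := fun i s hs =>
      List.mem_append_right _ (List.mem_map.mpr ⟨s, List.mem_range.mpr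
        (lt_of_lt_of_le hs (Finset.le_sup (Finset.mem_univ i))), rfl⟩)
    have heq₁ : (fun ω => trc N (g₁ ω))
        = fun ω => (fun e => trc N (f₁ (fun i : {i // i ∈ A₁} =>
            psi k (tv i.1) i.1 (fun idx => Xfam k L idx e)))) (Jmap U0 σ L ω) := by
      funext ω
      refine congrArg (trc N) ?_
      rw [hg₁]
      exact congrArg f₁ (funext fun i =>
        psi_ilhs (tv i.1) i.1 ω L hnd (hinlL i.1) (hinrL i.1))
    have heq₂ : (fun ω => trc N (g₂ ω))
        = fun ω => (fun e => trc N (f₂ (fun i : {i // i ∈ A₂} =>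
            psi k (tv i.1) i.1 (fun idx => Xfam k L idx e)))) (Jmap U0 σ L ω) := by
      funext ω
      refine congrArg (trc N) ?_
      rw [hg₂]
      exact congrArg f₂ (funext fun i =>
        psi_ilhs (tv i.1) i.1 ω L hnd (hinlL i.1) (hinrL i.1))
    have hE₁ : Measurable (fun e => trc N (f₁ (fun i : {i // i ∈ A₁} =>
        psi k (tv i.1) i.1 (fun idx => Xfam k L idx e)))) :=
      (trc_meas N).comp (hms₁.comp (measurable_pi_lambda _ fun i =>
        (psi_meas _ _).comp (measurable_pi_lambda _ fun idx => meas_Xfam L idx)))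
    have hE₂ : Measurable (fun e => trc N (f₂ (fun i : {i // i ∈ A₂} =>
        psi k (tv i.1) i.1 (fun idx => Xfam k L idx e)))) :=
      (trc_meas N).comp (hms₂.comp (measurable_pi_lambda _ fun i =>
        (psi_meas _ _).comp (measurable_pi_lambda _ fun idx => meas_Xfam L idx)))
    rw [heq₁, heq₂, ← covar_map μ (meas_Jmap hU hσm L) hE₁ hE₂]
    have hdisjJ : Disjoint (A₁.attach.biUnion fun i => blk k (tv i.1) i.1)
        (A₂.attach.biUnion fun i => blk k (tv i.1) i.1) := by
      rw [Finset.disjoint_biUnion_left]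
      intro i _
      rw [Finset.disjoint_biUnion_right]
      intro i' _
      refine blk_disj fun he => ?_
      exact Finset.disjoint_left.mp hA i.2 (he ▸ i'.2)
    exact NAfam_L ⟨hU, hσm, hUlaw, hσlaw, hInd⟩ L hnd
      (A₁.attach.biUnion fun i => blk k (tv i.1) i.1)
      (A₂.attach.biUnion fun i => blk k (tv i.1) i.1) hdisjJ
      (fun y => trc N (f₁ (fun i : {i // i ∈ A₁} => psi k (tv i.1) i.1 y)))
      (fun y => trc N (f₂ (fun i : {i // i ∈ A₂} => psi k (tv i.1) i.1 y)))
      (fun y y' hy => trc_mono N (hm₁ fun i => psi_mono hk0 _ _ hy))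
      (fun y y' hy => trc_mono N (hm₂ fun i => psi_mono hk0 _ _ hy))
      ((trc_meas N).comp (hms₁.comp (measurable_pi_lambda _ fun i => psi_meas _ _)))
      ((trc_meas N).comp (hms₂.comp (measurable_pi_lambda _ fun i => psi_meas _ _)))
      (fun y y' hy => congrArg (trc N) (congrArg f₁ (funext fun i =>
        psi_dep (tv i.1) i.1 y y' fun idx hidx =>
          hy idx (Finset.mem_biUnion.mpr ⟨i, Finset.mem_attach _ i, hidx⟩))))
      (fun y y' hy => congrArg (trc N) (congrArg f₂ (funext fun i =>
        psi_dep (tv i.1) i.1 y y' fun idx hidx =>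
          hy idx (Finset.mem_biUnion.mpr ⟨i, Finset.mem_attach _ i, hidx⟩))))
      ⟨(N:ℝ), fun y => trc_bd N _⟩ ⟨(N:ℝ), fun y => trc_bd N _⟩
  -- step 2: pass to the limit via dominated convergence
  have ht₁ : Filter.Tendsto (fun N : ℕ => ∫ ω, trc N (g₁ ω) ∂μ) Filter.atTop
      (nhds (∫ ω, g₁ ω ∂μ)) := by
    refine tendsto_integral_of_dominated_convergence (fun ω => |g₁ ω|)
      (fun N => ((trc_meas N).comp hmg₁).aestronglyMeasurable) hI₁.abs
      (fun N => Filter.Eventually.of_forall fun ω => by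
        simpa [Real.norm_eq_abs] using trc_abs_le N (g₁ ω))
      (Filter.Eventually.of_forall fun ω => trc_tendsto (g₁ ω))
  have ht₂ : Filter.Tendsto (fun N : ℕ => ∫ ω, trc N (g₂ ω) ∂μ) Filter.atTop
      (nhds (∫ ω, g₂ ω ∂μ)) := by
    refine tendsto_integral_of_dominated_convergence (fun ω => |g₂ ω|)
      (fun N => ((trc_meas N).comp hmg₂).aestronglyMeasurable) hI₂.abs
      (fun N => Filter.Eventually.of_forall fun ω => by
        simpa [Real.norm_eq_abs] using trc_abs_le N (g₂ ω))
      (Filter.Eventually.of_forall fun ω => trc_tendsto (g₂ ω))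
  have ht₁₂ : Filter.Tendsto (fun N : ℕ => ∫ ω, trc N (g₁ ω) * trc N (g₂ ω) ∂μ)
      Filter.atTop (nhds (∫ ω, g₁ ω * g₂ ω ∂μ)) := by
    refine tendsto_integral_of_dominated_convergence (fun ω => |g₁ ω * g₂ ω|)
      (fun N => (((trc_meas N).comp hmg₁).mul ((trc_meas N).comp hmg₂)).aestronglyMeasurable)
      hI₁₂.abs
      (fun N => Filter.Eventually.of_forall fun ω => by
        simp only [Real.norm_eq_abs, abs_mul]
        exact mul_le_mul (trc_abs_le N _) (trc_abs_le N _) (abs_nonneg _) (abs_nonneg _))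
      (Filter.Eventually.of_forall fun ω => (trc_tendsto (g₁ ω)).mul (trc_tendsto (g₂ ω)))
  have hcov : Filter.Tendsto
      (fun N : ℕ => covar μ (fun ω => trc N (g₁ ω)) (fun ω => trc N (g₂ ω)))
      Filter.atTop (nhds (covar μ g₁ g₂)) := by
    simp only [covar]
    exact Filter.Tendsto.sub ht₁₂ (ht₁.mul ht₂)
  exact le_of_tendsto hcov (Filter.Eventually.of_forall key)

end Main

end ILHSProof

/-- For any finite times `t₁, …, t_k`, the tuple `{U_{t₁}⁽¹⁾, …, U_{t_k}⁽ᵏ⁾}` of ILHS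
variates is negatively associated. -/
theorem ilhs_negAssoc {Ω : Type*} [MeasurableSpace Ω] (μ : Measure Ω)
    [IsProbabilityMeasure μ] {k : ℕ} (hk : 2 ≤ k)
    (U0 : Fin k → Ω → ℝ) (σ : ℕ → Ω → Equiv.Perm (Fin k)) (h : IsILHS μ U0 σ) :
    ∀ tv : Fin k → ℕ, NegAssoc μ (fun j ω => ilhs U0 σ (tv j) j ω) := by
  exact ILHSProof.main_negAssoc μ hk U0 σ h
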